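/- Let R = ℚ[x11, x22, x21, x12, x23, x13, x14, x24] and let I be the ideal generated by x11*x22 − x21*x12, x12*x23 − x22*x13, and x13*x24 − x23*x14. Then the Krull dimension of the quotient ring R/I equals 5. -/

import Mathlib

set_option maxHeartbeats 1000000

open MvPolynomial

noncomputable section

abbrev R : Type := MvPolynomial (Fin 8) ℚ

def x11 : R := X 0
def x22 : R := X 1
def x21 : R := X 2
def x12 : R := X 3
def x23 : R := X 4
def x13 : R := X 5
def x14 : R := X 6
def x24 : R := X 7

def I : Ideal R :=
  Ideal.span {x11 * x22 - x21 * x12, x12 * x23 - x22 * x13, x13 * x24 - x23 * x14}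

def Q1 : Ideal R :=
  Ideal.span {x23 * x14 - x13 * x24, x21 * x14 - x11 * x24, x22 * x14 - x12 * x24,
    x12 * x23 - x22 * x13, x11 * x23 - x21 * x13, x11 * x22 - x21 * x12}

def Q2 : Ideal R := Ideal.span {x13, x23, x11 * x22 - x21 * x12}

def Q3 : Ideal R := Ideal.span {x12, x22, x23 * x14 - x13 * x24}

abbrev Uu : Type := MvPolynomial (Fin 5) ℚ

section Escape

variable {B : Type*} [CommRing B] [Algebra ℚ B]

lemma poly_escape {S : Type*} [CommRing S] (φ : S →+* B) (p0 p1 : Ideal B)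
    (hp0 : p0.IsPrime) (h01 : p0 ≤ p1) (x0 : B) (hx01 : x0 ∈ p1) (hx00 : x0 ∉ p0)
    (hcoeff : ∀ c : S, φ c ∈ p1 → c = 0) :
    ∀ (d : ℕ) (F : Polynomial S), F.natDegree ≤ d → Polynomial.eval₂ φ x0 F ∈ p0 → F = 0 := by
  intro d
  induction d with
  | zero =>
    intro F h0 hev
    have hF : F = Polynomial.C (F.coeff 0) := Polynomial.eq_C_of_natDegree_le_zero h0
    rw [hF] at hev ⊢
    rw [Polynomial.eval₂_C] at hev
    rw [hcoeff _ (h01 hev), Polynomial.C_0]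
  | succ d ih =>
    intro F hd hev
    have hkey : Polynomial.X * F.divX + Polynomial.C (F.coeff 0) = F := Polynomial.X_mul_divX_add F
    have hev' : x0 * Polynomial.eval₂ φ x0 F.divX + φ (F.coeff 0) ∈ p0 := by
      have heq : Polynomial.eval₂ φ x0 (Polynomial.X * F.divX + Polynomial.C (F.coeff 0)) =
          x0 * Polynomial.eval₂ φ x0 F.divX + φ (F.coeff 0) := by
        rw [Polynomial.eval₂_add, Polynomial.eval₂_mul, Polynomial.eval₂_X, Polynomial.eval₂_C]
      rw [← heq, hkey]
      exact hev
    have h1 : φ (F.coeff 0) ∈ p1 := by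
      have hmul : x0 * Polynomial.eval₂ φ x0 F.divX ∈ p1 := Ideal.mul_mem_right _ _ hx01
      have := Ideal.sub_mem p1 (h01 hev') hmul
      simpa using this
    have hc0 : F.coeff 0 = 0 := hcoeff _ h1
    rw [hc0, Polynomial.C_0, add_zero] at hkey
    have hev2 : x0 * Polynomial.eval₂ φ x0 F.divX ∈ p0 := by
      have heq : Polynomial.eval₂ φ x0 (Polynomial.X * F.divX) =
          x0 * Polynomial.eval₂ φ x0 F.divX := by
        rw [Polynomial.eval₂_mul, Polynomial.eval₂_X]
      rw [← heq, hkey]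
      exact hev
    have hdiv : F.divX = 0 := by
      refine ih F.divX ?_ ((hp0.mem_or_mem hev2).resolve_left hx00)
      have := Polynomial.natDegree_divX_eq_natDegree_tsub_one (p := F)
      omega
    rw [← hkey, hdiv, mul_zero]

lemma aeval_finSuccEquiv' {n : ℕ} (x : Fin (n+1) → B) (Q : MvPolynomial (Fin (n+1)) ℚ) :
    Polynomial.eval₂ (↑(aeval (fun i : Fin n => x i.succ) : MvPolynomial (Fin n) ℚ →ₐ[ℚ] B) :
        MvPolynomial (Fin n) ℚ →+* B) (x 0)
      (finSuccEquiv ℚ n Q) = aeval x Q := by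
  induction Q using MvPolynomial.induction_on with
  | C a =>
    rw [finSuccEquiv_apply]
    simp
  | add p q hp hq => simp [map_add, Polynomial.eval₂_add, hp, hq]
  | mul_X p i hp =>
    rw [map_mul, Polynomial.eval₂_mul, hp, map_mul, aeval_X]
    congr 1
    refine Fin.cases ?_ ?_ i
    · rw [finSuccEquiv_X_zero]; simp
    · intro j
      rw [finSuccEquiv_X_succ]
      simp

lemma escape : ∀ (n : ℕ) (p : Fin (n+1) → Ideal B) (_ : ∀ i, (p i).IsPrime)
    (_ : Monotone p) (x : Fin n → B) (_ : ∀ i : Fin n, x i ∈ p i.succ)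
    (_ : ∀ i : Fin n, x i ∉ p i.castSucc) (Q : MvPolynomial (Fin n) ℚ),
    aeval x Q ∈ p 0 → Q = 0 := by
  intro n
  induction n with
  | zero =>
    intro p hp _ x _ _ Q hQ
    obtain ⟨a, rfl⟩ : ∃ a, Q = C a := ⟨Q.coeff 0, MvPolynomial.eq_C_of_isEmpty Q⟩
    by_contra hne
    have ha : a ≠ 0 := fun h => hne (by rw [h, map_zero])
    rw [aeval_C] at hQ
    have h1 : (1 : B) ∈ p 0 := by
      have := Ideal.mul_mem_left _ (algebraMap ℚ B a⁻¹) hQ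
      rwa [← map_mul, inv_mul_cancel₀ ha, map_one] at this
    exact (hp 0).ne_top ((Ideal.eq_top_iff_one _).2 h1)
  | succ n ih =>
    intro p hp hmono x hx1 hx0 Q hQ
    have hcoeff : ∀ c : MvPolynomial (Fin n) ℚ,
        (aeval (fun i : Fin n => x i.succ) : MvPolynomial (Fin n) ℚ →ₐ[ℚ] B) c ∈ p 1 → c = 0 := by
      intro c hc
      refine ih (fun i => p i.succ) (fun i => hp _) (fun i j hij => hmono (by simpa using hij))
        (fun i => x i.succ) (fun i => ?_) (fun i => ?_) c hc
      · have := hx1 i.succ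
        simpa using this
      · show x i.succ ∉ p (i.castSucc.succ)
        rw [Fin.succ_castSucc]
        exact hx0 i.succ
    have h01 : p 0 ≤ p 1 := hmono (by norm_num [Fin.le_def])
    have hx01 : x 0 ∈ p 1 := by simpa using hx1 0
    have hx00 : x 0 ∉ p 0 := by simpa using hx0 0
    have h0 := poly_escape (↑(aeval (fun i : Fin n => x i.succ) :
        MvPolynomial (Fin n) ℚ →ₐ[ℚ] B) : MvPolynomial (Fin n) ℚ →+* B) (p 0) (p 1) (hp 0) h01 (x 0) hx01 hx00 hcoeff
      (finSuccEquiv ℚ n Q).natDegree (finSuccEquiv ℚ n Q) le_rfl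
      (by rw [aeval_finSuccEquiv']; exact hQ)
    exact (finSuccEquiv ℚ n).injective (by simp [h0])

end Escape

section Chart

lemma chart_all (J : Ideal R) (s : Uu →ₐ[ℚ] R) (w : Uu)
    (hvars : ∀ i : Fin 8, ∃ (N : ℕ) (g : Uu), s w ^ N * X i - s g ∈ J) :
    ∀ f : R, ∃ (N : ℕ) (g : Uu), s w ^ N * f - s g ∈ J := by
  intro f
  induction f using MvPolynomial.induction_on with
  | C a =>
    refine ⟨0, C a, ?_⟩
    have : s (C a) = C a := by
      rw [show (C a : Uu) = algebraMap ℚ Uu a from rfl, AlgHom.commutes]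
      rfl
    rw [pow_zero, one_mul, this, sub_self]
    exact J.zero_mem
  | add p q hp hq =>
    obtain ⟨N, g, hg⟩ := hp
    obtain ⟨M, g', hg'⟩ := hq
    refine ⟨N + M, w ^ M * g + w ^ N * g', ?_⟩
    have h1 : s w ^ M * (s w ^ N * p - s g) ∈ J := Ideal.mul_mem_left _ _ hg
    have h2 : s w ^ N * (s w ^ M * q - s g') ∈ J := Ideal.mul_mem_left _ _ hg'
    have hsum := Ideal.add_mem _ h1 h2
    have heq : s w ^ M * (s w ^ N * p - s g) + s w ^ N * (s w ^ M * q - s g') =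
        s w ^ (N + M) * (p + q) - s (w ^ M * g + w ^ N * g') := by
      rw [map_add, map_mul, map_mul, map_pow, map_pow, pow_add]
      ring
    rwa [heq] at hsum
  | mul_X p i hp =>
    obtain ⟨N, g, hg⟩ := hp
    obtain ⟨M, g', hg'⟩ := hvars i
    refine ⟨N + M, g * g', ?_⟩
    have h1 : (s w ^ M * X i) * (s w ^ N * p - s g) ∈ J := Ideal.mul_mem_left _ _ hg
    have h2 : s g * (s w ^ M * X i - s g') ∈ J := Ideal.mul_mem_left _ _ hg'
    have hsum := Ideal.add_mem _ h1 h2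
    have heq : (s w ^ M * X i) * (s w ^ N * p - s g) + s g * (s w ^ M * X i - s g') =
        s w ^ (N + M) * (p * X i) - s (g * g') := by
      rw [map_mul, pow_add]
      ring
    rwa [heq] at hsum

/-- every polynomial of total degree ≤ D is in the span of the monomials with all exponents ≤ D -/
lemma mem_span_monomials {D : ℕ} (f : Uu) (hf : f.totalDegree ≤ D) :
    f ∈ Submodule.span ℚ (Set.range (fun (m : Fin 5 → Fin (D+1)) =>
      (monomial (Finsupp.equivFunOnFinite.symm (fun j => (m j : ℕ))) 1 : Uu))) := by
  rw [f.as_sum]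
  apply Submodule.sum_mem
  intro v hv
  have hvd : ∀ j, v j ≤ D := by
    intro j
    have hstep : v j ≤ v.sum fun _ n => n := by
      by_cases h : v j = 0
      · simp [h]
      · rw [Finsupp.sum]
        exact Finset.single_le_sum (f := fun a => v a) (fun _ _ => Nat.zero_le _)
          (Finsupp.mem_support_iff.2 h)
    exact le_trans hstep (le_trans (MvPolynomial.le_totalDegree hv) hf)
  have : (monomial v) (coeff v f) = (coeff v f) • (monomial v 1 : Uu) := by
    rw [MvPolynomial.smul_monomial, smul_eq_mul, mul_one]
  rw [this]
  refine Submodule.smul_mem _ _ (Submodule.subset_span ⟨fun j => ⟨v j, by have := hvd j; omega⟩, ?_⟩)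
  congr 1
  ext j
  simp


lemma arith_ineq (a t : ℕ) (ht : t = (a+1)^5) : (a*t+1)^5 < (t+1)^6 := by
  have ht1 : 1 ≤ t := ht ▸ Nat.one_le_pow _ _ (by omega)
  have h6 : a*t+1 ≤ t*(a+1) := by nlinarith
  have hc : (a*t+1)^5 ≤ t^6 := by
    calc (a*t+1)^5 ≤ (t*(a+1))^5 := Nat.pow_le_pow_left h6 5
      _ = t^5*((a+1))^5 := by rw [mul_pow]
      _ = t^5 * t := by rw [← ht]
      _ = t^6 := by ring
  have : t^6 < (t+1)^6 := Nat.pow_lt_pow_left (by omega) (by omega)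
  omega

/-- the counting argument: a nontrivial ℚ-linear relation among the
"w-homogenized monomials" in `g i`. -/
lemma exists_relation (g : Fin 6 → Uu) (w : Uu) (N0 : ℕ) :
    ∃ (t : ℕ) (c : (Fin 6 → Fin (t+1)) → ℚ),
      (∑ e, c e • ((∏ i, g i ^ ((e i : ℕ))) * w ^ (N0 * (6*t - ∑ i, (e i : ℕ))))) = 0 ∧
      ∃ e, c e ≠ 0 := by
  classical
  obtain ⟨M, hgM, hwM⟩ : ∃ M, (∀ i, (g i).totalDegree ≤ M) ∧ (w.totalDegree ≤ M) :=
    ⟨(Finset.univ.sup fun i => (g i).totalDegree) + w.totalDegree + 1,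
      fun i => by
        have h := Finset.le_sup (f := fun i => (g i).totalDegree) (Finset.mem_univ i)
        omega,
      by omega⟩
  obtain ⟨t, ht⟩ : ∃ t : ℕ, t = (6*M*(N0+1)+1)^5 := ⟨_, rfl⟩
  obtain ⟨D, hD⟩ : ∃ D : ℕ, D = 6*t*M*(N0+1) := ⟨_, rfl⟩
  refine ⟨t, ?_⟩
  set G : (Fin 6 → Fin (t+1)) → Uu := fun e =>
    (∏ i, (g i) ^ ((e i : ℕ))) * w ^ (N0 * (6 * t - ∑ i, (e i : ℕ))) with hG
  have hsum_le : ∀ e : Fin 6 → Fin (t+1), (∑ i, (e i : ℕ)) ≤ 6 * t := by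
    intro e
    calc (∑ i, (e i : ℕ)) ≤ ∑ _i : Fin 6, t := Finset.sum_le_sum (fun i _ => by omega)
    _ = 6 * t := by simp [Finset.sum_const, mul_comm]
  have hGdeg : ∀ e, (G e).totalDegree ≤ D := by
    intro e
    have h1 : (∏ i, (g i) ^ ((e i : ℕ)) : Uu).totalDegree ≤ 6 * t * M := by
      refine le_trans (MvPolynomial.totalDegree_finset_prod _ _) ?_
      calc (∑ i, ((g i) ^ ((e i : ℕ))).totalDegree)
          ≤ ∑ i, (e i : ℕ) * M := Finset.sum_le_sum (fun i _ =>
            le_trans (MvPolynomial.totalDegree_pow _ _)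
              (Nat.mul_le_mul_left _ (hgM i)))
        _ = (∑ i, (e i : ℕ)) * M := by rw [Finset.sum_mul]
        _ ≤ 6 * t * M := Nat.mul_le_mul_right _ (hsum_le e)
    have h2 : ((w : Uu) ^ (N0 * (6 * t - ∑ i, (e i : ℕ)))).totalDegree ≤ 6 * t * M * N0 := by
      refine le_trans (MvPolynomial.totalDegree_pow _ _) ?_
      calc N0 * (6 * t - ∑ i, (e i : ℕ)) * w.totalDegree ≤ N0 * (6 * t) * M := by
            have h3 : (6 * t - ∑ i, (e i : ℕ)) ≤ 6 * t := Nat.sub_le _ _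
            exact Nat.mul_le_mul (Nat.mul_le_mul_left _ h3) hwM
        _ = 6 * t * M * N0 := by ring
    refine le_trans (MvPolynomial.totalDegree_mul _ _) ?_
    calc (∏ i, (g i) ^ ((e i : ℕ)) : Uu).totalDegree
          + ((w : Uu) ^ (N0 * (6 * t - ∑ i, (e i : ℕ)))).totalDegree
        ≤ 6 * t * M + 6 * t * M * N0 := Nat.add_le_add h1 h2
      _ = D := by rw [hD]; ring
  have hnli : ¬ LinearIndependent ℚ G := by
    intro hli
    set fam5 : (Fin 5 → Fin (D+1)) → Uu := fun m =>
      (monomial (Finsupp.equivFunOnFinite.symm (fun j => (m j : ℕ))) 1 : Uu) with hfam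
    set W := Submodule.span ℚ (Set.range fam5) with hW
    have hmem : ∀ e, G e ∈ W := fun e => mem_span_monomials _ (hGdeg e)
    have hli' : LinearIndependent ℚ (fun e => (⟨G e, hmem e⟩ : W)) := by
      refine LinearIndependent.of_comp W.subtype ?_
      convert hli
      rfl
    haveI : FiniteDimensional ℚ W := FiniteDimensional.span_of_finite ℚ (Set.finite_range fam5)
    have hcard := hli'.fintype_card_le_finrank
    have hrank : Module.finrank ℚ W ≤ Fintype.card (Fin 5 → Fin (D+1)) :=
      finrank_range_le_card fam5
    rw [Fintype.card_fun, Fintype.card_fin, Fintype.card_fin] at hcard hrank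
    have hboundle : (t+1)^6 ≤ (D+1)^5 := le_trans hcard hrank
    have harith := arith_ineq (6*M*(N0+1)) t ht
    have hDa : D = (6*M*(N0+1)) * t := by rw [hD]; ring
    rw [← hDa] at harith
    omega
  obtain ⟨c, hc0, e0, hce0⟩ := Fintype.not_linearIndependent_iff.mp hnli
  exact ⟨c, hc0, e0, hce0⟩

lemma chart_main (J : Ideal R) (s : Uu →ₐ[ℚ] R) (w : Uu)
    (hvars : ∀ i : Fin 8, ∃ (N : ℕ) (g : Uu), s w ^ N * X i - s g ∈ J)
    (p : Ideal R) (hp : p.IsPrime) (hJp : J ≤ p) (hw : s w ∉ p) (x : Fin 6 → R) :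
    ∃ Q : MvPolynomial (Fin 6) ℚ, Q ≠ 0 ∧ aeval x Q ∈ p := by
  classical
  -- a common exponent
  obtain ⟨N0, g, base⟩ : ∃ (N0 : ℕ) (g : Fin 6 → Uu),
      ∀ i, s w ^ N0 * x i - s (g i) ∈ J := by
    choose N0f gf hNg using fun i => chart_all J s w hvars (x i)
    refine ⟨Finset.univ.sup N0f, fun i => w ^ (Finset.univ.sup N0f - N0f i) * gf i, fun i => ?_⟩
    have h1 : s w ^ (Finset.univ.sup N0f - N0f i) * (s w ^ (N0f i) * x i - s (gf i)) ∈ J :=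
      Ideal.mul_mem_left _ _ (hNg i)
    have heq : s w ^ (Finset.univ.sup N0f - N0f i) * (s w ^ (N0f i) * x i - s (gf i)) =
        s w ^ (Finset.univ.sup N0f) * x i -
          s (w ^ (Finset.univ.sup N0f - N0f i) * gf i) := by
      rw [map_mul, map_pow, mul_sub, ← mul_assoc, ← pow_add,
        Nat.sub_add_cancel (Finset.le_sup (Finset.mem_univ i))]
    rwa [heq] at h1
  obtain ⟨t, c, hc0, e0, hce0⟩ := exists_relation g w N0
  set G : (Fin 6 → Fin (t+1)) → Uu := fun e =>
    (∏ i, (g i) ^ ((e i : ℕ))) * w ^ (N0 * (6 * t - ∑ i, (e i : ℕ))) with hG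
  have hsum_le : ∀ e : Fin 6 → Fin (t+1), (∑ i, (e i : ℕ)) ≤ 6 * t := by
    intro e
    calc (∑ i, (e i : ℕ)) ≤ ∑ _i : Fin 6, t := Finset.sum_le_sum (fun i _ => by omega)
    _ = 6 * t := by simp [Finset.sum_const, mul_comm]
  -- build Q
  set toF : (Fin 6 → Fin (t+1)) → (Fin 6 →₀ ℕ) := fun e =>
    Finsupp.equivFunOnFinite.symm (fun i => (e i : ℕ)) with htoF
  have htoF_inj : Function.Injective toF := by
    intro e e' h
    funext i
    have h2 := congrArg (fun (v : Fin 6 →₀ ℕ) => v i) h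
    simp only [htoF, Finsupp.coe_equivFunOnFinite_symm] at h2
    exact Fin.ext h2
  set Q : MvPolynomial (Fin 6) ℚ := ∑ e, monomial (toF e) (c e) with hQ
  have hQne : Q ≠ 0 := by
    intro h
    apply hce0
    have hco : coeff (toF e0) Q = c e0 := by
      rw [hQ, MvPolynomial.coeff_sum]
      rw [Finset.sum_eq_single e0]
      · simp [MvPolynomial.coeff_monomial]
      · intro e _ hne
        rw [MvPolynomial.coeff_monomial, if_neg (fun hh => hne (htoF_inj hh))]
      · intro hh; exact absurd (Finset.mem_univ e0) hh
    rw [h] at hco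
    simpa using hco.symm
  refine ⟨Q, hQne, ?_⟩
  -- the congruence computation, in the quotient by J
  set π : R →+* R ⧸ J := Ideal.Quotient.mk J with hπ
  have hbase' : ∀ i, π (s w) ^ N0 * π (x i) = π (s (g i)) := by
    intro i
    have h3 := (Ideal.Quotient.eq (I := J)).mpr (base i)
    rw [map_mul, map_pow] at h3
    exact h3
  have key : ∀ e : Fin 6 → Fin (t+1),
      π (s w) ^ (N0 * (6*t)) * ∏ i, π (x i) ^ ((e i : ℕ)) = π (s (G e)) := by
    intro e
    have hGm : π (s (G e)) = (∏ i, π (s (g i)) ^ ((e i : ℕ))) *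
        π (s w) ^ (N0 * (6 * t - ∑ i, (e i : ℕ))) := by
      rw [hG]
      simp only [map_mul, map_pow, map_prod]
    rw [hGm]
    have hterm : ∀ i, π (s (g i)) ^ ((e i : ℕ)) =
        (π (s w) ^ N0) ^ ((e i : ℕ)) * π (x i) ^ ((e i : ℕ)) := by
      intro i
      rw [← hbase' i, mul_pow]
    simp only [hterm]
    rw [Finset.prod_mul_distrib]
    have hps : (∏ i, (π (s w) ^ N0) ^ ((e i : ℕ))) = π (s w) ^ (N0 * ∑ i, (e i : ℕ)) := by
      simp only [← pow_mul]
      rw [Finset.prod_pow_eq_pow_sum]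
      congr 1
      rw [Finset.mul_sum]
    rw [hps]
    have hexp : N0 * (∑ i, (e i : ℕ)) + N0 * (6 * t - ∑ i, (e i : ℕ)) = N0 * (6*t) := by
      rw [← Nat.mul_add, Nat.add_sub_cancel' (hsum_le e)]
    calc π (s w) ^ (N0 * (6*t)) * ∏ i, π (x i) ^ ((e i : ℕ))
        = π (s w) ^ (N0 * (∑ i, (e i : ℕ)) + N0 * (6 * t - ∑ i, (e i : ℕ)))
            * ∏ i, π (x i) ^ ((e i : ℕ)) := by rw [hexp]
      _ = π (s w) ^ (N0 * ∑ i, (e i : ℕ)) * (∏ i, π (x i) ^ ((e i : ℕ)))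
            * π (s w) ^ (N0 * (6 * t - ∑ i, (e i : ℕ))) := by rw [pow_add]; ring
  -- sum up
  have hsum : π (s w ^ (N0 * (6*t)) * aeval x Q) = 0 := by
    have hQev : aeval x Q = ∑ e, algebraMap ℚ R (c e) * ∏ i, x i ^ ((e i : ℕ)) := by
      rw [hQ, map_sum]
      refine Finset.sum_congr rfl (fun e _ => ?_)
      rw [aeval_monomial]
      congr 1
      rw [htoF]
      rw [Finsupp.prod_fintype]
      · simp
      · intro i; exact pow_zero _
    rw [hQev, Finset.mul_sum, map_sum]
    have hterm2 : ∀ e : Fin 6 → Fin (t+1),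
        π (s w ^ (N0 * (6*t)) * (algebraMap ℚ R (c e) * ∏ i, x i ^ ((e i : ℕ)))) =
        π (s (C (c e) * G e)) := by
      intro e
      have hsC : s (C (c e) * G e) = algebraMap ℚ R (c e) * s (G e) := by
        rw [map_mul, ← MvPolynomial.algebraMap_eq, AlgHom.commutes]
      have h1 : π (s w ^ (N0 * (6*t)) * (algebraMap ℚ R (c e) * ∏ i, x i ^ ((e i : ℕ)))) =
          π (algebraMap ℚ R (c e)) * (π (s w) ^ (N0 * (6*t)) * ∏ i, π (x i) ^ ((e i : ℕ))) := by
        rw [map_mul, map_mul, map_pow]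
        simp only [map_prod, map_pow]
        ring
      rw [h1, key e, ← map_mul, hsC]
    rw [Finset.sum_congr rfl (fun e _ => hterm2 e)]
    rw [← map_sum, ← map_sum]
    have hzero : (∑ e, C (c e) * G e : Uu) = 0 := by
      simp only [← MvPolynomial.smul_eq_C_mul]
      exact hc0
    rw [hzero, map_zero, map_zero]
  have hmemJ : s w ^ (N0 * (6*t)) * aeval x Q ∈ J := by
    rwa [← Ideal.Quotient.eq_zero_iff_mem]
  have hmemp : s w ^ (N0 * (6*t)) * aeval x Q ∈ p := hJp hmemJ
  rcases hp.mem_or_mem hmemp with h | h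
  · exact absurd (hp.mem_of_pow_mem _ h) hw
  · exact h

end Chart

lemma memJ {J : Ideal R} (b : R) {a : R} (hb : b ∈ J) (h : a = b) : a ∈ J := h ▸ hb

lemma case_main (p : Ideal R) (hp : p.IsPrime) (hIp : I ≤ p) (x : Fin 6 → R) :
    ∃ Q : MvPolynomial (Fin 6) ℚ, Q ≠ 0 ∧ aeval x Q ∈ p := by
  have hg1 : x11 * x22 - x21 * x12 ∈ p := hIp (Ideal.subset_span (by simp))
  have hg2 : x12 * x23 - x22 * x13 ∈ p := hIp (Ideal.subset_span (by simp))
  have hg3 : x13 * x24 - x23 * x14 ∈ p := hIp (Ideal.subset_span (by simp))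
  have hone : (1 : R) ∉ p := (Ideal.ne_top_iff_one p).mp hp.ne_top
  by_cases hA : x12 ∈ p ∧ x22 ∈ p
  · by_cases hB : x13 ∈ p ∧ x23 ∈ p
    · -- leaf D0 : kill x12,x22,x13,x23
      refine chart_main (Ideal.span {x12, x22, x13, x23}) (aeval ![x11, x21, x14, x24, 0]) 1
        ?_ p hp ?_ ?_ x
      · intro i
        fin_cases i
        · exact ⟨0, X 0, memJ 0 (Ideal.zero_mem _) (by simp [x11])⟩
        · exact ⟨0, 0, memJ x22 (Ideal.subset_span (by simp)) (by simp [x22])⟩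
        · exact ⟨0, X 1, memJ 0 (Ideal.zero_mem _) (by simp [x21])⟩
        · exact ⟨0, 0, memJ x12 (Ideal.subset_span (by simp)) (by simp [x12])⟩
        · exact ⟨0, 0, memJ x23 (Ideal.subset_span (by simp)) (by simp [x23])⟩
        · exact ⟨0, 0, memJ x13 (Ideal.subset_span (by simp)) (by simp [x13])⟩
        · exact ⟨0, X 2, memJ 0 (Ideal.zero_mem _) (by simp [x14])⟩
        · exact ⟨0, X 3, memJ 0 (Ideal.zero_mem _) (by simp [x24])⟩
      · rw [Ideal.span_le]
        intro y hy
        simp only [Set.mem_insert_iff, Set.mem_singleton_iff] at hy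
        rcases hy with rfl|rfl|rfl|rfl
        · exact hA.1
        · exact hA.2
        · exact hB.1
        · exact hB.2
      · simpa using hone
    · -- Q3 branch : x12, x22 ∈ p, pivot x13 or x23
      have hq3 : x13 * x24 - x23 * x14 ∈ p := hg3
      rcases not_and_or.mp hB with h13 | h23
      · -- pivot x13 : solve x24
        refine chart_main (Ideal.span {x12, x22, x13 * x24 - x23 * x14})
          (aeval ![x13, x23, x14, x11, x21]) (X 0) ?_ p hp ?_ ?_ x
        · intro i
          fin_cases i
          · exact ⟨0, X 3, memJ 0 (Ideal.zero_mem _) (by simp [x11])⟩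
          · exact ⟨0, 0, memJ x22 (Ideal.subset_span (by simp)) (by simp [x22])⟩
          · exact ⟨0, X 4, memJ 0 (Ideal.zero_mem _) (by simp [x21])⟩
          · exact ⟨0, 0, memJ x12 (Ideal.subset_span (by simp)) (by simp [x12])⟩
          · exact ⟨0, X 1, memJ 0 (Ideal.zero_mem _) (by simp [x23])⟩
          · exact ⟨0, X 0, memJ 0 (Ideal.zero_mem _) (by simp [x13])⟩
          · exact ⟨0, X 2, memJ 0 (Ideal.zero_mem _) (by simp [x14])⟩
          · exact ⟨1, X 1 * X 2, memJ (x13 * x24 - x23 * x14)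
              (Ideal.subset_span (by simp)) (by simp [x13, x23, x14, x24]; try ring)⟩
        · rw [Ideal.span_le]
          intro y hy
          simp only [Set.mem_insert_iff, Set.mem_singleton_iff] at hy
          rcases hy with rfl|rfl|rfl
          · exact hA.1
          · exact hA.2
          · exact hq3
        · simpa [x13] using h13
      · -- pivot x23 : solve x14
        refine chart_main (Ideal.span {x12, x22, x13 * x24 - x23 * x14})
          (aeval ![x23, x13, x24, x11, x21]) (X 0) ?_ p hp ?_ ?_ x
        · intro i
          fin_cases i
          · exact ⟨0, X 3, memJ 0 (Ideal.zero_mem _) (by simp [x11])⟩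
          · exact ⟨0, 0, memJ x22 (Ideal.subset_span (by simp)) (by simp [x22])⟩
          · exact ⟨0, X 4, memJ 0 (Ideal.zero_mem _) (by simp [x21])⟩
          · exact ⟨0, 0, memJ x12 (Ideal.subset_span (by simp)) (by simp [x12])⟩
          · exact ⟨0, X 0, memJ 0 (Ideal.zero_mem _) (by simp [x23])⟩
          · exact ⟨0, X 1, memJ 0 (Ideal.zero_mem _) (by simp [x13])⟩
          · exact ⟨1, X 1 * X 2, memJ (-(x13 * x24 - x23 * x14))
              (neg_mem (Ideal.subset_span (by simp)))
              (by simp [x13, x23, x14, x24]; try ring)⟩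
          · exact ⟨0, X 2, memJ 0 (Ideal.zero_mem _) (by simp [x24])⟩
        · rw [Ideal.span_le]
          intro y hy
          simp only [Set.mem_insert_iff, Set.mem_singleton_iff] at hy
          rcases hy with rfl|rfl|rfl
          · exact hA.1
          · exact hA.2
          · exact hq3
        · simpa [x23] using h23
  · by_cases hB : x13 ∈ p ∧ x23 ∈ p
    · -- Q2 branch : x13, x23 ∈ p, pivot x22 or x12
      rcases not_and_or.mp hA with h12 | h22
      · -- pivot x12 : solve x21
        refine chart_main (Ideal.span {x13, x23, x11 * x22 - x21 * x12})
          (aeval ![x12, x11, x22, x14, x24]) (X 0) ?_ p hp ?_ ?_ x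
        · intro i
          fin_cases i
          · exact ⟨0, X 1, memJ 0 (Ideal.zero_mem _) (by simp [x11])⟩
          · exact ⟨0, X 2, memJ 0 (Ideal.zero_mem _) (by simp [x22])⟩
          · exact ⟨1, X 1 * X 2, memJ (-(x11 * x22 - x21 * x12))
              (neg_mem (Ideal.subset_span (by simp)))
              (by simp [x11, x22, x21, x12]; try ring)⟩
          · exact ⟨0, X 0, memJ 0 (Ideal.zero_mem _) (by simp [x12])⟩
          · exact ⟨0, 0, memJ x23 (Ideal.subset_span (by simp)) (by simp [x23])⟩
          · exact ⟨0, 0, memJ x13 (Ideal.subset_span (by simp)) (by simp [x13])⟩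
          · exact ⟨0, X 3, memJ 0 (Ideal.zero_mem _) (by simp [x14])⟩
          · exact ⟨0, X 4, memJ 0 (Ideal.zero_mem _) (by simp [x24])⟩
        · rw [Ideal.span_le]
          intro y hy
          simp only [Set.mem_insert_iff, Set.mem_singleton_iff] at hy
          rcases hy with rfl|rfl|rfl
          · exact hB.1
          · exact hB.2
          · exact hg1
        · simpa [x12] using h12
      · -- pivot x22 : solve x11
        refine chart_main (Ideal.span {x13, x23, x11 * x22 - x21 * x12})
          (aeval ![x22, x21, x12, x14, x24]) (X 0) ?_ p hp ?_ ?_ x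
        · intro i
          fin_cases i
          · exact ⟨1, X 1 * X 2, memJ (x11 * x22 - x21 * x12)
              (Ideal.subset_span (by simp)) (by simp [x11, x22, x21, x12]; try ring)⟩
          · exact ⟨0, X 0, memJ 0 (Ideal.zero_mem _) (by simp [x22])⟩
          · exact ⟨0, X 1, memJ 0 (Ideal.zero_mem _) (by simp [x21])⟩
          · exact ⟨0, X 2, memJ 0 (Ideal.zero_mem _) (by simp [x12])⟩
          · exact ⟨0, 0, memJ x23 (Ideal.subset_span (by simp)) (by simp [x23])⟩
          · exact ⟨0, 0, memJ x13 (Ideal.subset_span (by simp)) (by simp [x13])⟩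
          · exact ⟨0, X 3, memJ 0 (Ideal.zero_mem _) (by simp [x14])⟩
          · exact ⟨0, X 4, memJ 0 (Ideal.zero_mem _) (by simp [x24])⟩
        · rw [Ideal.span_le]
          intro y hy
          simp only [Set.mem_insert_iff, Set.mem_singleton_iff] at hy
          rcases hy with rfl|rfl|rfl
          · exact hB.1
          · exact hB.2
          · exact hg1
        · simpa [x22] using h22
    · -- Q1 branch : ¬(x12∈p ∧ x22∈p), ¬(x13∈p ∧ x23∈p)
      have hm24 : x22 * x14 - x12 * x24 ∈ p := by
        rcases not_and_or.mp hB with h13 | h23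
        · have hx : x13 * (x22 * x14 - x12 * x24) =
              -(x14 * (x12 * x23 - x22 * x13)) - x12 * (x13 * x24 - x23 * x14) := by
            simp only [x11, x22, x21, x12, x23, x13, x14, x24]; ring
          have hmem : x13 * (x22 * x14 - x12 * x24) ∈ p := by
            rw [hx]
            exact Ideal.sub_mem _ (neg_mem (Ideal.mul_mem_left _ _ hg2))
              (Ideal.mul_mem_left _ _ hg3)
          exact (hp.mem_or_mem hmem).resolve_left h13
        · have hx : x23 * (x22 * x14 - x12 * x24) =
              -(x22 * (x13 * x24 - x23 * x14)) - x24 * (x12 * x23 - x22 * x13) := by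
            simp only [x11, x22, x21, x12, x23, x13, x14, x24]; ring
          have hmem : x23 * (x22 * x14 - x12 * x24) ∈ p := by
            rw [hx]
            exact Ideal.sub_mem _ (neg_mem (Ideal.mul_mem_left _ _ hg3))
              (Ideal.mul_mem_left _ _ hg2)
          exact (hp.mem_or_mem hmem).resolve_left h23
      have hJq1 : Ideal.span {x11 * x22 - x21 * x12, x12 * x23 - x22 * x13,
          x22 * x14 - x12 * x24} ≤ p := by
        rw [Ideal.span_le]
        intro y hy
        simp only [Set.mem_insert_iff, Set.mem_singleton_iff] at hy
        rcases hy with rfl|rfl|rfl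
        · exact hg1
        · exact hg2
        · exact hm24
      rcases not_and_or.mp hA with h12 | h22
      · -- pivot x12
        refine chart_main (Ideal.span {x11 * x22 - x21 * x12, x12 * x23 - x22 * x13,
            x22 * x14 - x12 * x24}) (aeval ![x12, x11, x13, x14, x22]) (X 0) ?_ p hp hJq1 ?_ x
        · intro i
          fin_cases i
          · exact ⟨0, X 1, memJ 0 (Ideal.zero_mem _) (by simp [x11])⟩
          · exact ⟨0, X 4, memJ 0 (Ideal.zero_mem _) (by simp [x22])⟩
          · exact ⟨1, X 4 * X 1, memJ (-(x11 * x22 - x21 * x12))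
              (neg_mem (Ideal.subset_span (by simp)))
              (by simp [x11, x22, x21, x12]; try ring)⟩
          · exact ⟨0, X 0, memJ 0 (Ideal.zero_mem _) (by simp [x12])⟩
          · exact ⟨1, X 4 * X 2, memJ (x12 * x23 - x22 * x13)
              (Ideal.subset_span (by simp)) (by simp [x12, x23, x22, x13]; try ring)⟩
          · exact ⟨0, X 2, memJ 0 (Ideal.zero_mem _) (by simp [x13])⟩
          · exact ⟨0, X 3, memJ 0 (Ideal.zero_mem _) (by simp [x14])⟩
          · exact ⟨1, X 4 * X 3, memJ (-(x22 * x14 - x12 * x24))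
              (neg_mem (Ideal.subset_span (by simp)))
              (by simp [x22, x14, x12, x24]; try ring)⟩
        · simpa [x12] using h12
      · -- pivot x22
        refine chart_main (Ideal.span {x11 * x22 - x21 * x12, x12 * x23 - x22 * x13,
            x22 * x14 - x12 * x24}) (aeval ![x22, x21, x23, x24, x12]) (X 0) ?_ p hp hJq1 ?_ x
        · intro i
          fin_cases i
          · exact ⟨1, X 4 * X 1, memJ (x11 * x22 - x21 * x12)
              (Ideal.subset_span (by simp)) (by simp [x11, x22, x21, x12]; try ring)⟩
          · exact ⟨0, X 0, memJ 0 (Ideal.zero_mem _) (by simp [x22])⟩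
          · exact ⟨0, X 1, memJ 0 (Ideal.zero_mem _) (by simp [x21])⟩
          · exact ⟨0, X 4, memJ 0 (Ideal.zero_mem _) (by simp [x12])⟩
          · exact ⟨0, X 2, memJ 0 (Ideal.zero_mem _) (by simp [x23])⟩
          · exact ⟨1, X 4 * X 2, memJ (-(x12 * x23 - x22 * x13))
              (neg_mem (Ideal.subset_span (by simp)))
              (by simp [x12, x23, x22, x13]; try ring)⟩
          · exact ⟨1, X 4 * X 3, memJ (x22 * x14 - x12 * x24)
              (Ideal.subset_span (by simp)) (by simp [x22, x14, x12, x24]; try ring)⟩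
          · exact ⟨0, X 3, memJ 0 (Ideal.zero_mem _) (by simp [x24])⟩
        · simpa [x22] using h22


-- ==================== upper bound ====================

lemma series_length_le (ser : LTSeries (PrimeSpectrum (R ⧸ I))) : ser.length ≤ 5 := by
  by_contra hlen
  push_neg at hlen
  have h6 : 6 ≤ ser.length := hlen
  set P : Fin 7 → Ideal R := fun i =>
    Ideal.comap (Ideal.Quotient.mk I) (ser.toFun ⟨(i : ℕ), by omega⟩).asIdeal with hP
  have hPprime : ∀ i, (P i).IsPrime := fun i => Ideal.IsPrime.comap _
  have hPsm : StrictMono P := by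
    intro i j hij
    have hlt : ser.toFun ⟨(i : ℕ), by omega⟩ < ser.toFun ⟨(j : ℕ), by omega⟩ :=
      ser.strictMono (Fin.mk_lt_mk.mpr hij)
    have hle : (ser.toFun ⟨(i : ℕ), by omega⟩).asIdeal ≤ (ser.toFun ⟨(j : ℕ), by omega⟩).asIdeal :=
      le_of_lt hlt
    refine lt_of_le_of_ne (Ideal.comap_mono hle) ?_
    intro heq
    have := Ideal.comap_injective_of_surjective _ Ideal.Quotient.mk_surjective heq
    exact absurd (PrimeSpectrum.ext this) (ne_of_lt hlt)
  have hxch : ∀ i : Fin 6, ∃ y, y ∈ P i.succ ∧ y ∉ P i.castSucc := by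
    intro i
    obtain ⟨y, h1, h2⟩ := SetLike.exists_of_lt (hPsm (Fin.castSucc_lt_succ (i := i)))
    exact ⟨y, h1, h2⟩
  choose x hx1 hx0 using hxch
  have hI0 : I ≤ P 0 := by
    intro a ha
    simp only [hP]
    rw [Ideal.mem_comap, Ideal.Quotient.eq_zero_iff_mem.mpr ha]
    exact Submodule.zero_mem _
  obtain ⟨Q, hQne, hQmem⟩ := case_main (P 0) (hPprime 0) hI0 x
  exact hQne (escape 6 P hPprime hPsm.monotone x hx1 hx0 Q hQmem)

lemma dimUpper : ringKrullDim (R ⧸ I) ≤ 5 := by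
  rw [ringKrullDim, Order.krullDim]
  refine iSup_le fun ser => ?_
  have := series_length_le ser
  exact_mod_cast Nat.cast_le.mpr this

-- ==================== lower bound ====================

abbrev Lloc : Type := Localization.Away (X 0 : Uu)

lemma powers_le : Submonoid.powers (X 0 : Uu) ≤ nonZeroDivisors Uu :=
  powers_le_nonZeroDivisors_of_noZeroDivisors (MvPolynomial.X_ne_zero 0)

instance : IsDomain Lloc := IsLocalization.isDomain_localization powers_le

def φL : Uu →+* Lloc := algebraMap Uu Lloc

lemma hφL_inj : Function.Injective φL := IsLocalization.injective Lloc powers_le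

def vals : Fin 8 → Lloc :=
  ![φL (X 1 * X 2) * IsLocalization.Away.invSelf (S := Lloc) (X 0 : Uu), φL (X 0), φL (X 1), φL (X 2),
    0, 0, φL (X 3), φL (X 4)]

def ψ : R →+* Lloc := eval₂Hom (φL.comp (algebraMap ℚ Uu)) vals

lemma ψ_x11 : ψ x11 = φL (X 1 * X 2) * IsLocalization.Away.invSelf (S := Lloc) (X 0 : Uu) := by
  simp [ψ, x11, vals]
lemma ψ_x22 : ψ x22 = φL (X 0) := by simp [ψ, x22, vals]
lemma ψ_x21 : ψ x21 = φL (X 1) := by simp [ψ, x21, vals]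
lemma ψ_x12 : ψ x12 = φL (X 2) := by simp [ψ, x12, vals]
lemma ψ_x23 : ψ x23 = 0 := by rw [ψ, x23, eval₂Hom_X']; rfl
lemma ψ_x13 : ψ x13 = 0 := by rw [ψ, x13, eval₂Hom_X']; rfl
lemma ψ_x14 : ψ x14 = φL (X 3) := by rw [ψ, x14, eval₂Hom_X']; rfl
lemma ψ_x24 : ψ x24 = φL (X 4) := by rw [ψ, x24, eval₂Hom_X']; rfl

lemma ψ_q1 : ψ (x11 * x22 - x21 * x12) = 0 := by
  rw [map_sub, map_mul, map_mul, ψ_x11, ψ_x22, ψ_x21, ψ_x12]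
  have h : φL (X 0) * IsLocalization.Away.invSelf (S := Lloc) (X 0 : Uu) = 1 :=
    IsLocalization.Away.mul_invSelf _
  have h2 : φL (X 1 * X 2) * IsLocalization.Away.invSelf (S := Lloc) (X 0 : Uu) * φL (X 0) =
      φL (X 1 * X 2) * (φL (X 0) * IsLocalization.Away.invSelf (S := Lloc) (X 0 : Uu)) := by
    ring
  rw [h2, h, mul_one, map_mul, sub_self]

lemma ψ_q2 : ψ (x12 * x23 - x22 * x13) = 0 := by
  rw [map_sub, map_mul, map_mul, ψ_x23, ψ_x13, mul_zero, mul_zero, sub_self]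

lemma ψ_q3 : ψ (x13 * x24 - x23 * x14) = 0 := by
  rw [map_sub, map_mul, map_mul, ψ_x13, ψ_x23, zero_mul, zero_mul, sub_self]

def P0 : Ideal R := RingHom.ker ψ

lemma P0_prime : P0.IsPrime := RingHom.ker_isPrime ψ

lemma hIP0 : I ≤ P0 := by
  rw [I, Ideal.span_le]
  intro y hy
  simp only [Set.mem_insert_iff, Set.mem_singleton_iff] at hy
  rcases hy with rfl|rfl|rfl
  · exact RingHom.mem_ker.mpr ψ_q1
  · exact RingHom.mem_ker.mpr ψ_q2
  · exact RingHom.mem_ker.mpr ψ_q3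

def eps (S : Finset (Fin 8)) : R →ₐ[ℚ] R := aeval (fun i => if i ∈ S then 0 else X i)

def PS (S : Finset (Fin 8)) : Ideal R := RingHom.ker ((eps S) : R →+* R)

lemma PS_prime (S : Finset (Fin 8)) : (PS S).IsPrime := RingHom.ker_isPrime _

lemma X_mem_PS {S : Finset (Fin 8)} {i : Fin 8} (h : i ∈ S) : X i ∈ PS S := by
  simp [PS, RingHom.mem_ker, eps, h]

lemma X_not_mem_PS {S : Finset (Fin 8)} {i : Fin 8} (h : i ∉ S) : X i ∉ PS S := by
  simp [PS, RingHom.mem_ker, eps, h, MvPolynomial.X_ne_zero]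

lemma PS_mono {S S' : Finset (Fin 8)} (h : S ⊆ S') : PS S ≤ PS S' := by
  intro f hf
  have hcompX : (eps S').comp (eps S) = eps S' := by
    apply MvPolynomial.algHom_ext
    intro i
    by_cases hi : i ∈ S
    · simp [eps, hi, h hi]
    · simp [eps, hi]
  have hf0 : (eps S) f = 0 := hf
  show (eps S') f = 0
  rw [← hcompX]
  show (eps S') ((eps S) f) = 0
  rw [hf0, map_zero]

def S1 : Finset (Fin 8) := {0, 3, 4, 5}
def S2 : Finset (Fin 8) := {0, 2, 3, 4, 5}
def S3 : Finset (Fin 8) := {0, 1, 2, 3, 4, 5}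
def S4 : Finset (Fin 8) := {0, 1, 2, 3, 4, 5, 6}
def S5 : Finset (Fin 8) := {0, 1, 2, 3, 4, 5, 6, 7}

def Q2span : Ideal R := Ideal.span {x13, x23, x11 * x22 - x21 * x12}

lemma Q2span_le_PS1 : Q2span ≤ PS S1 := by
  rw [Q2span, Ideal.span_le]
  intro y hy
  simp only [Set.mem_insert_iff, Set.mem_singleton_iff] at hy
  rcases hy with rfl|rfl|rfl
  · exact X_mem_PS (by decide)
  · exact X_mem_PS (by decide)
  · show (eps S1) (x11 * x22 - x21 * x12) = 0
    have e0 : (eps S1) (X 0) = 0 := by simp [eps, show ((0 : Fin 8) ∈ S1) from by decide]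
    have e3 : (eps S1) (X 3) = 0 := by simp [eps, show ((3 : Fin 8) ∈ S1) from by decide]
    rw [x11, x22, x21, x12, map_sub, map_mul, map_mul, e0, e3, zero_mul, mul_zero, sub_self]

def sig2 : Uu →ₐ[ℚ] R := aeval ![x22, x21, x12, x14, x24]

lemma hvars22 : ∀ i : Fin 8, ∃ (N : ℕ) (g : Uu), sig2 (X 0) ^ N * X i - sig2 g ∈ Q2span := by
  have memJ : ∀ (b : R) {a : R}, b ∈ Q2span → a = b → a ∈ Q2span := by
    intro b a hb h; exact h ▸ hb
  intro i
  fin_cases i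
  · exact ⟨1, X 1 * X 2, memJ (x11 * x22 - x21 * x12)
      (Ideal.subset_span (by simp)) (by simp [sig2, x11, x22, x21, x12]; try ring)⟩
  · exact ⟨0, X 0, memJ 0 (Ideal.zero_mem _) (by simp [sig2, x22])⟩
  · exact ⟨0, X 1, memJ 0 (Ideal.zero_mem _) (by simp [sig2, x21])⟩
  · exact ⟨0, X 2, memJ 0 (Ideal.zero_mem _) (by simp [sig2, x12])⟩
  · exact ⟨0, 0, memJ x23 (Ideal.subset_span (by simp)) (by simp [sig2, x23])⟩
  · exact ⟨0, 0, memJ x13 (Ideal.subset_span (by simp)) (by simp [sig2, x13])⟩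
  · exact ⟨0, X 3, memJ 0 (Ideal.zero_mem _) (by simp [sig2, x14])⟩
  · exact ⟨0, X 4, memJ 0 (Ideal.zero_mem _) (by simp [sig2, x24])⟩

lemma hψs : ∀ g : Uu, ψ (sig2 g) = φL g := by
  have hhom : ψ.comp (sig2 : Uu →+* R) = φL := by
    apply MvPolynomial.ringHom_ext
    · intro a
      show ψ (sig2 (C a)) = φL (C a)
      have h1 : sig2 (C a) = C a := by
        rw [show (C a : Uu) = algebraMap ℚ Uu a from rfl, AlgHom.commutes]
        rfl
      rw [h1]
      show eval₂Hom (φL.comp (algebraMap ℚ Uu)) vals (C a) = _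
      rw [eval₂Hom_C]
      rfl
    · intro k
      show ψ (sig2 (X k)) = φL (X k)
      fin_cases k
      · show ψ (sig2 (X 0)) = φL (X 0)
        have h : sig2 (X 0) = x22 := by simp [sig2]
        rw [h, ψ_x22]
      · show ψ (sig2 (X 1)) = φL (X 1)
        have h : sig2 (X 1) = x21 := by simp [sig2]
        rw [h, ψ_x21]
      · show ψ (sig2 (X 2)) = φL (X 2)
        have h : sig2 (X 2) = x12 := by simp [sig2]
        rw [h, ψ_x12]
      · show ψ (sig2 (X 3)) = φL (X 3)
        have h : sig2 (X 3) = x14 := by simp [sig2]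
        rw [h, ψ_x14]
      · show ψ (sig2 (X 4)) = φL (X 4)
        have h : sig2 (X 4) = x24 := by simp [sig2]
        rw [h, ψ_x24]
  intro g
  exact RingHom.congr_fun hhom g

lemma ψ_Q2span : ∀ y ∈ Q2span, ψ y = 0 := by
  intro y hy
  have : Q2span ≤ RingHom.ker ψ := by
    rw [Q2span, Ideal.span_le]
    intro z hz
    simp only [Set.mem_insert_iff, Set.mem_singleton_iff] at hz
    rcases hz with rfl|rfl|rfl
    · exact RingHom.mem_ker.mpr ψ_x13
    · exact RingHom.mem_ker.mpr ψ_x23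
    · exact RingHom.mem_ker.mpr ψ_q1
  exact RingHom.mem_ker.mp (this hy)

lemma P0_le_PS1 : P0 ≤ PS S1 := by
  intro f hf
  obtain ⟨N, g, hNg⟩ := chart_all Q2span sig2 (X 0) hvars22 f
  have hψf : ψ f = 0 := hf
  have hs0 : sig2 (X 0) = x22 := by simp [sig2]
  have h1 : ψ (sig2 (X 0) ^ N * f - sig2 g) = 0 := ψ_Q2span _ hNg
  rw [map_sub, map_mul, map_pow, hψf, mul_zero, zero_sub, neg_eq_zero, hψs] at h1
  have hg0 : g = 0 := hφL_inj (by rw [h1, map_zero])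
  rw [hg0, map_zero, sub_zero, hs0] at hNg
  have hmem : x22 ^ N * f ∈ PS S1 := Q2span_le_PS1 hNg
  rcases (PS_prime S1).mem_or_mem hmem with h | h
  · have : x22 ∈ PS S1 := (PS_prime S1).mem_of_pow_mem _ h
    exact absurd this (by rw [x22]; exact X_not_mem_PS (by decide))
  · exact h

lemma x11_not_mem_P0 : x11 ∉ P0 := by
  intro h
  have hψ0 : ψ x11 = 0 := h
  rw [ψ_x11] at hψ0
  have h2 : φL (X 1 * X 2) * (φL (X 0) * IsLocalization.Away.invSelf (S := Lloc) (X 0 : Uu)) =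
      0 := by
    rw [← mul_assoc, mul_comm (φL (X 1 * X 2)) (φL (X 0))]
    rw [mul_assoc, hψ0, mul_zero]
  have h3 : φL (X 0) * IsLocalization.Away.invSelf (S := Lloc) (X 0 : Uu) = 1 :=
    IsLocalization.Away.mul_invSelf _
  rw [h3, mul_one] at h2
  have : (X 1 * X 2 : Uu) = 0 := hφL_inj (by rw [h2, map_zero])
  exact (mul_ne_zero (MvPolynomial.X_ne_zero 1) (MvPolynomial.X_ne_zero 2)) this

-- the chain of six primes in R
def chain6 : Fin 6 → Ideal R := ![P0, PS S1, PS S2, PS S3, PS S4, PS S5]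

lemma chain6_prime : ∀ j, (chain6 j).IsPrime := by
  intro j
  fin_cases j
  · exact P0_prime
  · exact PS_prime S1
  · exact PS_prime S2
  · exact PS_prime S3
  · exact PS_prime S4
  · exact PS_prime S5

lemma I_le_Q2span : I ≤ Q2span := by
  rw [I, Ideal.span_le]
  intro y hy
  simp only [Set.mem_insert_iff, Set.mem_singleton_iff] at hy
  rcases hy with rfl|rfl|rfl
  · exact Ideal.subset_span (by simp)
  · -- x12 * x23 - x22 * x13 ∈ Q2span
    have : x12 * x23 - x22 * x13 = x12 * x23 - x22 * x13 := rfl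
    have h1 : x23 ∈ Q2span := Ideal.subset_span (by simp)
    have h2 : x13 ∈ Q2span := Ideal.subset_span (by simp)
    have : x12 * x23 - x22 * x13 = x12 * x23 - x22 * x13 := rfl
    exact Ideal.sub_mem _ (Ideal.mul_mem_left _ _ h1) (Ideal.mul_mem_left _ _ h2)
  · have h1 : x13 ∈ Q2span := Ideal.subset_span (by simp)
    have h2 : x23 ∈ Q2span := Ideal.subset_span (by simp)
    have heq : x13 * x24 - x23 * x14 = x24 * x13 - x14 * x23 := by ring
    rw [heq]
    exact Ideal.sub_mem _ (Ideal.mul_mem_left _ _ h1) (Ideal.mul_mem_left _ _ h2)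

lemma chain6_I : ∀ j, I ≤ chain6 j := by
  have hPS1 : I ≤ PS S1 := le_trans I_le_Q2span Q2span_le_PS1
  intro j
  fin_cases j
  · exact hIP0
  · exact hPS1
  · exact le_trans hPS1 (PS_mono (by decide))
  · exact le_trans hPS1 (PS_mono (by decide))
  · exact le_trans hPS1 (PS_mono (by decide))
  · exact le_trans hPS1 (PS_mono (by decide))

lemma chain6_step : ∀ i : Fin 5, chain6 i.castSucc < chain6 i.succ := by
  intro i
  have hPS_lt : ∀ (S S' : Finset (Fin 8)) (k : Fin 8), S ⊆ S' → k ∈ S' → k ∉ S →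
      PS S < PS S' := by
    intro S S' k hss hk hk'
    exact SetLike.lt_iff_le_and_exists.mpr ⟨PS_mono hss, X k, X_mem_PS hk, X_not_mem_PS hk'⟩
  fin_cases i
  · -- P0 < PS S1
    show P0 < PS S1
    refine SetLike.lt_iff_le_and_exists.mpr ⟨P0_le_PS1, x11, ?_, x11_not_mem_P0⟩
    rw [x11]; exact X_mem_PS (by decide)
  · show PS S1 < PS S2
    exact hPS_lt _ _ 2 (by decide) (by decide) (by decide)
  · show PS S2 < PS S3
    exact hPS_lt _ _ 1 (by decide) (by decide) (by decide)
  · show PS S3 < PS S4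
    exact hPS_lt _ _ 6 (by decide) (by decide) (by decide)
  · show PS S4 < PS S5
    exact hPS_lt _ _ 7 (by decide) (by decide) (by decide)

-- map to the quotient spectrum
def pts (j : Fin 6) : PrimeSpectrum (R ⧸ I) :=
  ⟨Ideal.map (Ideal.Quotient.mk I) (chain6 j),
    Ideal.map_isPrime_of_surjective Ideal.Quotient.mk_surjective
      (by rw [Ideal.mk_ker]; exact chain6_I j) (H := chain6_prime j)⟩

lemma map_lt_map {a b : Ideal R} (hIa : I ≤ a) (hab : a < b) :
    Ideal.map (Ideal.Quotient.mk I) a < Ideal.map (Ideal.Quotient.mk I) b := by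
  refine lt_of_le_of_ne (Ideal.map_mono hab.le) (fun heq => ?_)
  have hca : Ideal.comap (Ideal.Quotient.mk I) (Ideal.map (Ideal.Quotient.mk I) a) = a := by
    rw [Ideal.comap_map_of_surjective _ Ideal.Quotient.mk_surjective,
      ← RingHom.ker_eq_comap_bot, Ideal.mk_ker, sup_eq_left.mpr hIa]
  have hcb : Ideal.comap (Ideal.Quotient.mk I) (Ideal.map (Ideal.Quotient.mk I) b) = b := by
    rw [Ideal.comap_map_of_surjective _ Ideal.Quotient.mk_surjective,
      ← RingHom.ker_eq_comap_bot, Ideal.mk_ker, sup_eq_left.mpr (le_trans hIa hab.le)]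
  have : a = b := by rw [← hca, ← hcb, heq]
  exact absurd this (ne_of_lt hab)

def lowerSeries : LTSeries (PrimeSpectrum (R ⧸ I)) :=
  ⟨5, pts, by
    intro i
    show pts i.castSucc < pts i.succ
    have h : chain6 i.castSucc < chain6 i.succ := chain6_step i
    exact map_lt_map (chain6_I i.castSucc) h⟩

lemma dimLower : (5 : WithBot ℕ∞) ≤ ringKrullDim (R ⧸ I) := by
  have h := Order.LTSeries.length_le_krullDim lowerSeries
  have hl : lowerSeries.length = 5 := rfl
  rw [hl] at h
  rw [ringKrullDim]
  exact_mod_cast h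



theorem dim_R_mod_I : ringKrullDim (R ⧸ I) = 5 := le_antisymm dimUpper dimLower

end
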